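/- Let G be a finite directed graph, let q ≥ 1, and let f0, f1 be probability distributions on V. Then V_q(f0, f1), the infimum of I_q(v, g) over all solutions (f, v, g) of the discrete transport equation with endpoints f0 and f1, equals the infimum of I_q(v, g) over all pairs (v, g) — v : [0,1] → (E → ℝ) continuous, g : [0,1] → (E → ℝ) a continuous path of probability distributions on E — satisfying the endpoint constraint Σ_{k∈E} ω_{x,k} ∫_0^1 v(t)_k g(t)_k dt = f1(x) − f0(x) for every x ∈ V. -/

import Mathlib

open scoped BigOperators
open Set

/-- A probability distribution on a finite set. -/
def IsProbDist {S : Type*} [Fintype S] (f : S → ℝ) : Prop :=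
  (∀ s, 0 ≤ f s) ∧ ∑ s, f s = 1

/-- A coupling of two distributions on a finite set. -/
def IsCoupling {V : Type*} [Fintype V] (f0 f1 : V → ℝ) (π : V → V → ℝ) : Prop :=
  (∀ x y, 0 ≤ π x y) ∧ (∀ x, ∑ y, π x y = f0 x) ∧ (∀ y, ∑ x, π x y = f1 y)

/-- Wasserstein-1 distance w.r.t. the shortest-path distance of a graph. -/
noncomputable def W1 {V : Type*} [Fintype V] (T : SimpleGraph V) (f0 f1 : V → ℝ) : ℝ :=
  sInf {c : ℝ | ∃ π : V → V → ℝ, IsCoupling f0 f1 π ∧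
    c = ∑ x, ∑ y, (T.dist x y : ℝ) * π x y}

/-- The tail of `f` past `x` in a tree rooted at `r`: the sum of `f y` over the
vertices `y` such that the unique path from `r` to `y` passes through `x`
(equivalently, `dist r x + dist x y = dist r y`). -/
noncomputable def tailSum {V : Type*} [Fintype V] (T : SimpleGraph V) (r : V)
    (f : V → ℝ) (x : V) : ℝ :=
  ∑ y, if T.dist r x + T.dist x y = T.dist r y then f y else 0

/-- The energy functional `I_q`. -/
noncomputable def Iq {E : Type*} [Fintype E] (q : ℝ) (v g : ℝ → E → ℝ) : ℝ :=
  (∫ t in (0:ℝ)..1, ∑ k, g t k * |v t k| ^ q) ^ (1 / q)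

/-- A finite directed graph on vertex type `V` with edge type `E`. -/
structure DiGraph (V E : Type*) where
  tail : E → V
  head : E → V
  ne : ∀ k, tail k ≠ head k

namespace DiGraph

variable {V E : Type*}

/-- The signed incidence matrix. -/
def incidence [DecidableEq V] (G : DiGraph V E) (x : V) (k : E) : ℝ :=
  if G.head k = x then 1 else if G.tail k = x then -1 else 0

/-- The underlying undirected simple graph. -/
def toSimpleGraph (G : DiGraph V E) : SimpleGraph V where
  Adj x y := x ≠ y ∧ ∃ k, (G.tail k = x ∧ G.head k = y) ∨ (G.tail k = y ∧ G.head k = x)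
  symm := by constructor; rintro x y ⟨hne, k, h⟩; exact ⟨hne.symm, k, h.symm⟩
  loopless := by constructor; rintro x ⟨hne, -⟩; exact hne rfl

/-- `G` is a rooted tree with root `r`: the underlying graph is a tree, and every
edge is oriented away from the root. -/
def IsRootedTree (G : DiGraph V E) (r : V) : Prop :=
  G.toSimpleGraph.IsTree ∧
  ∀ k, G.toSimpleGraph.dist r (G.head k) = G.toSimpleGraph.dist r (G.tail k) + 1

end DiGraph

/-- A solution `(f, v, g)` of the discrete transport equation on `[0,1]`. -/
structure TransportSolution {V E : Type*} [Fintype V] [Fintype E] [DecidableEq V]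
    (G : DiGraph V E) where
  f : ℝ → V → ℝ
  v : ℝ → E → ℝ
  g : ℝ → E → ℝ
  f_prob : ∀ t ∈ Icc (0:ℝ) 1, IsProbDist (f t)
  g_prob : ∀ t ∈ Icc (0:ℝ) 1, IsProbDist (g t)
  v_cont : ContinuousOn (fun t => v t) (Icc (0:ℝ) 1)
  g_cont : ContinuousOn (fun t => g t) (Icc (0:ℝ) 1)
  transport : ∀ x : V, ∀ t ∈ Icc (0:ℝ) 1,
    HasDerivWithinAt (fun s => f s x) (∑ k, G.incidence x k * v t k * g t k) (Icc (0:ℝ) 1) t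

open MeasureTheory intervalIntegral


lemma rpow_abs_continuous (q : ℝ) (hq : 1 ≤ q) : Continuous fun x : ℝ => |x| ^ q := by
  apply continuous_iff_continuousAt.2
  intro x
  exact (Real.continuousAt_rpow_const _ _ (Or.inr (by linarith))).comp continuous_abs.continuousAt

/-- If `g` is nonneg on `[0,1]` with zero integral, then `∫ v g = 0`. -/
lemma integral_vg_zero {g v : ℝ → ℝ}
    (hg : ContinuousOn g (Icc (0:ℝ) 1)) (hv : ContinuousOn v (Icc (0:ℝ) 1))
    (hg0 : ∀ t ∈ Icc (0:ℝ) 1, 0 ≤ g t) (hzero : (∫ t in (0:ℝ)..1, g t) = 0) :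
    (∫ t in (0:ℝ)..1, v t * g t) = 0 := by
  obtain ⟨C, hC⟩ := isCompact_Icc.exists_bound_of_continuousOn hv
  have hC0 : 0 ≤ C := le_trans (norm_nonneg _) (hC 0 (by norm_num))
  have h1 : |∫ t in (0:ℝ)..1, v t * g t| ≤ ∫ t in (0:ℝ)..1, |v t * g t| :=
    intervalIntegral.abs_integral_le_integral_abs zero_le_one
  have h2 : (∫ t in (0:ℝ)..1, |v t * g t|) ≤ ∫ t in (0:ℝ)..1, C * g t := by
    apply intervalIntegral.integral_mono_on zero_le_one
    · apply ContinuousOn.intervalIntegrable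
      rw [uIcc_of_le zero_le_one]
      exact (hv.mul hg).abs
    · apply ContinuousOn.intervalIntegrable
      rw [uIcc_of_le zero_le_one]
      exact continuousOn_const.mul hg
    · intro t ht
      rw [abs_mul, abs_of_nonneg (hg0 t ht)]
      exact mul_le_mul_of_nonneg_right ((Real.norm_eq_abs _ ▸ hC t ht)) (hg0 t ht)
  have h3 : (∫ t in (0:ℝ)..1, C * g t) = 0 := by
    rw [intervalIntegral.integral_const_mul, hzero, mul_zero]
  have := h1.trans (h2.trans_eq h3)
  exact abs_eq_zero.mp (le_antisymm this (abs_nonneg _))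

/-- Per-edge Hölder/Jensen inequality. -/
lemma key_ineq (q : ℝ) (hq : 1 ≤ q) {g v : ℝ → ℝ}
    (hg : ContinuousOn g (Icc (0:ℝ) 1)) (hv : ContinuousOn v (Icc (0:ℝ) 1))
    (hg0 : ∀ t ∈ Icc (0:ℝ) 1, 0 ≤ g t) :
    |∫ t in (0:ℝ)..1, v t * g t| ^ q ≤
      (∫ t in (0:ℝ)..1, g t) ^ (q - 1) * ∫ t in (0:ℝ)..1, g t * |v t| ^ q := by
  have hq0 : (0:ℝ) < q := by linarith
  set m := ∫ t in (0:ℝ)..1, v t * g t with hm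
  set gb := ∫ t in (0:ℝ)..1, g t with hgb
  set J := ∫ t in (0:ℝ)..1, g t * |v t| ^ q with hJ
  have hgb0 : 0 ≤ gb := intervalIntegral.integral_nonneg zero_le_one hg0
  have hJcont : ContinuousOn (fun t => g t * |v t| ^ q) (Icc (0:ℝ) 1) :=
    hg.mul ((rpow_abs_continuous q hq).comp_continuousOn hv)
  have hJ0 : 0 ≤ J := intervalIntegral.integral_nonneg zero_le_one
    (fun t ht => mul_nonneg (hg0 t ht) (Real.rpow_nonneg (abs_nonneg _) q))
  -- step 1 : |m| ≤ ∫ g|v|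
  have step1 : |m| ≤ ∫ t in (0:ℝ)..1, g t * |v t| := by
    refine (intervalIntegral.abs_integral_le_integral_abs zero_le_one).trans_eq ?_
    apply intervalIntegral.integral_congr
    intro t ht
    rw [uIcc_of_le zero_le_one] at ht
    show |v t * g t| = g t * |v t|
    rw [abs_mul, abs_of_nonneg (hg0 t ht), mul_comm]
  rcases eq_or_lt_of_le hq with hq1 | hq1
  · -- q = 1
    subst hq1
    have : (∫ t in (0:ℝ)..1, g t * |v t|) = J := by
      rw [hJ]
      apply intervalIntegral.integral_congr
      intro t ht
      show g t * |v t| = g t * |v t| ^ (1:ℝ)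
      rw [Real.rpow_one]
    simpa [Real.rpow_one] using step1.trans_eq this
  · -- q > 1, Hölder
    set r := Real.conjExponent q with hr
    have hpq : q.HolderConjugate r := Real.HolderConjugate.conjExponent hq1
    have hsum : 1 / q + 1 / r = 1 := by
      rw [one_div, one_div]; exact hpq.inv_add_inv_eq_one
    have hrq : (1 / r) * q = q - 1 := by
      rw [hr, Real.conjExponent]
      field_simp
    set μ := volume.restrict (Ioc (0:ℝ) 1) with hμ
    haveI : IsFiniteMeasure μ := by
      constructor
      rw [hμ, Measure.restrict_apply_univ]
      simp
    set F := fun t => g t ^ (1/q) * |v t| with hF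
    set H := fun t => g t ^ (1/r) with hH
    have hIoc : Ioc (0:ℝ) 1 ⊆ Icc 0 1 := Ioc_subset_Icc_self
    have hFcont : ContinuousOn F (Icc (0:ℝ) 1) := by
      apply ContinuousOn.mul
      · exact (continuous_iff_continuousAt.2 fun x =>
          Real.continuousAt_rpow_const _ _ (Or.inr (by positivity))).comp_continuousOn hg
      · exact hv.abs
    have hHcont : ContinuousOn H (Icc (0:ℝ) 1) :=
      (continuous_iff_continuousAt.2 fun x =>
          Real.continuousAt_rpow_const _ _ (Or.inr (by
            have := hpq.symm.pos; positivity))).comp_continuousOn hg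
    have memF : MemLp F (ENNReal.ofReal q) μ := by
      obtain ⟨C, hC⟩ := isCompact_Icc.exists_bound_of_continuousOn hFcont
      exact MemLp.of_bound ((hFcont.mono hIoc).aestronglyMeasurable measurableSet_Ioc) C
        ((ae_restrict_iff' measurableSet_Ioc).2 (Filter.Eventually.of_forall
          fun t ht => hC t (hIoc ht)))
    have memH : MemLp H (ENNReal.ofReal r) μ := by
      obtain ⟨C, hC⟩ := isCompact_Icc.exists_bound_of_continuousOn hHcont
      exact MemLp.of_bound ((hHcont.mono hIoc).aestronglyMeasurable measurableSet_Ioc) C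
        ((ae_restrict_iff' measurableSet_Ioc).2 (Filter.Eventually.of_forall
          fun t ht => hC t (hIoc ht)))
    have hFnn : 0 ≤ᵐ[μ] F := (ae_restrict_iff' measurableSet_Ioc).2
      (Filter.Eventually.of_forall fun t ht =>
        mul_nonneg (Real.rpow_nonneg (hg0 t (hIoc ht)) _) (abs_nonneg _))
    have hHnn : 0 ≤ᵐ[μ] H := (ae_restrict_iff' measurableSet_Ioc).2
      (Filter.Eventually.of_forall fun t ht => Real.rpow_nonneg (hg0 t (hIoc ht)) _)
    have holder := MeasureTheory.integral_mul_le_Lp_mul_Lq_of_nonneg hpq hFnn hHnn memF memH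
    -- rewrite three integrals
    have hprod : (∫ a, F a * H a ∂μ) = ∫ t in (0:ℝ)..1, g t * |v t| := by
      rw [intervalIntegral.integral_of_le zero_le_one]
      apply MeasureTheory.integral_congr_ae
      refine (ae_restrict_iff' measurableSet_Ioc).2 (Filter.Eventually.of_forall fun t ht => ?_)
      have hgt := hg0 t (hIoc ht)
      rw [hF, hH]
      show g t ^ (1/q) * |v t| * g t ^ (1/r) = g t * |v t|
      rw [mul_right_comm, ← Real.rpow_add' hgt (by rw [hsum]; norm_num), hsum, Real.rpow_one]
    have hFq : (∫ a, F a ^ q ∂μ) = J := by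
      rw [hJ, intervalIntegral.integral_of_le zero_le_one]
      apply MeasureTheory.integral_congr_ae
      refine (ae_restrict_iff' measurableSet_Ioc).2 (Filter.Eventually.of_forall fun t ht => ?_)
      have hgt := hg0 t (hIoc ht)
      rw [hF]
      show (g t ^ (1/q) * |v t|) ^ q = g t * |v t| ^ q
      rw [Real.mul_rpow (Real.rpow_nonneg hgt _) (abs_nonneg _),
        ← Real.rpow_mul hgt, one_div_mul_cancel (ne_of_gt hq0), Real.rpow_one]
    have hHr : (∫ a, H a ^ r ∂μ) = gb := by
      rw [hgb, intervalIntegral.integral_of_le zero_le_one]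
      apply MeasureTheory.integral_congr_ae
      refine (ae_restrict_iff' measurableSet_Ioc).2 (Filter.Eventually.of_forall fun t ht => ?_)
      have hgt := hg0 t (hIoc ht)
      rw [hH]
      show (g t ^ (1/r)) ^ r = g t
      rw [← Real.rpow_mul hgt, one_div_mul_cancel (ne_of_gt hpq.symm.pos), Real.rpow_one]
    rw [hprod, hFq, hHr] at holder
    -- |m| ≤ J^{1/q} * gb^{1/r}; raise to q
    have hmle : |m| ≤ J ^ (1/q) * gb ^ (1/r) := step1.trans holder
    calc |m| ^ q ≤ (J ^ (1/q) * gb ^ (1/r)) ^ q :=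
          Real.rpow_le_rpow (abs_nonneg _) hmle (le_of_lt hq0)
      _ = gb ^ (q-1) * J := by
          rw [Real.mul_rpow (Real.rpow_nonneg hJ0 _) (Real.rpow_nonneg hgb0 _),
            ← Real.rpow_mul hJ0, ← Real.rpow_mul hgb0, one_div_mul_cancel (ne_of_gt hq0),
            Real.rpow_one, hrq, mul_comm]


/-- the reduced formulation of `V_q`. -/
theorem statement7 {V E : Type*} [Fintype V] [Fintype E] [DecidableEq V]
    (G : DiGraph V E) (q : ℝ) (hq : 1 ≤ q)
    (f0 f1 : V → ℝ) (h0 : IsProbDist f0) (h1 : IsProbDist f1) :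
    sInf {c : ℝ | ∃ sol : TransportSolution G,
        sol.f 0 = f0 ∧ sol.f 1 = f1 ∧ c = Iq q sol.v sol.g} =
    sInf {c : ℝ | ∃ v g : ℝ → E → ℝ,
        ContinuousOn (fun t => v t) (Icc (0:ℝ) 1) ∧
        ContinuousOn (fun t => g t) (Icc (0:ℝ) 1) ∧
        (∀ t ∈ Icc (0:ℝ) 1, IsProbDist (g t)) ∧
        (∀ x : V, ∑ k, G.incidence x k * (∫ t in (0:ℝ)..1, v t k * g t k)
          = f1 x - f0 x) ∧
        c = Iq q v g} := by
  classical
  have hq0 : (0:ℝ) < q := by linarith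
  set A := {c : ℝ | ∃ sol : TransportSolution G,
      sol.f 0 = f0 ∧ sol.f 1 = f1 ∧ c = Iq q sol.v sol.g} with hAdef
  set B := {c : ℝ | ∃ v g : ℝ → E → ℝ,
      ContinuousOn (fun t => v t) (Icc (0:ℝ) 1) ∧
      ContinuousOn (fun t => g t) (Icc (0:ℝ) 1) ∧
      (∀ t ∈ Icc (0:ℝ) 1, IsProbDist (g t)) ∧
      (∀ x : V, ∑ k, G.incidence x k * (∫ t in (0:ℝ)..1, v t k * g t k)
        = f1 x - f0 x) ∧
      c = Iq q v g} with hBdef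
  -- nonnegativity of Iq
  have hIqnn : ∀ v g : ℝ → E → ℝ, (∀ t ∈ Icc (0:ℝ) 1, ∀ k, 0 ≤ g t k) → 0 ≤ Iq q v g := by
    intro v g hg
    apply Real.rpow_nonneg
    apply intervalIntegral.integral_nonneg zero_le_one
    intro t ht
    exact Finset.sum_nonneg fun k _ => mul_nonneg (hg t ht k) (Real.rpow_nonneg (abs_nonneg _) q)
  have bddA : BddBelow A := by
    refine ⟨0, fun c hc => ?_⟩
    obtain ⟨sol, -, -, rfl⟩ := hc
    exact hIqnn _ _ fun t ht k => (sol.g_prob t ht).1 k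
  have bddB : BddBelow B := by
    refine ⟨0, fun c hc => ?_⟩
    obtain ⟨v, g, -, -, hgp, -, rfl⟩ := hc
    exact hIqnn _ _ fun t ht k => (hgp t ht).1 k
  -- direction 1 : A ⊆ B
  have hsub : A ⊆ B := by
    rintro c ⟨sol, hf0, hf1, rfl⟩
    refine ⟨sol.v, sol.g, sol.v_cont, sol.g_cont, sol.g_prob, ?_, rfl⟩
    intro x
    have hck : ∀ k : E, ContinuousOn (fun t => sol.v t k * sol.g t k) (Icc (0:ℝ) 1) :=
      fun k => ((continuous_apply k).comp_continuousOn sol.v_cont).mul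
        ((continuous_apply k).comp_continuousOn sol.g_cont)
    have hint : ∀ k : E,
        IntervalIntegrable (fun t => G.incidence x k * (sol.v t k * sol.g t k)) volume 0 1 := by
      intro k
      apply ContinuousOn.intervalIntegrable
      rw [uIcc_of_le zero_le_one]
      exact continuousOn_const.mul (hck k)
    have hFTC : (∫ t in (0:ℝ)..1, ∑ k, G.incidence x k * sol.v t k * sol.g t k)
        = sol.f 1 x - sol.f 0 x := by
      refine intervalIntegral.integral_eq_sub_of_hasDeriv_right_of_le
        (f := fun s => sol.f s x)
        (f' := fun t => ∑ k, G.incidence x k * sol.v t k * sol.g t k) zero_le_one ?_ ?_ ?_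
      · intro t ht
        exact (sol.transport x t ht).continuousWithinAt
      · intro t ht
        exact ((sol.transport x t (Ioo_subset_Icc_self ht)).hasDerivAt
          (Icc_mem_nhds ht.1 ht.2)).hasDerivWithinAt
      · apply ContinuousOn.intervalIntegrable
        rw [uIcc_of_le zero_le_one]
        apply continuousOn_finset_sum
        intro k _
        exact (continuousOn_const.mul
          ((continuous_apply k).comp_continuousOn sol.v_cont)).mul
          ((continuous_apply k).comp_continuousOn sol.g_cont)
    rw [hf0, hf1] at hFTC
    calc ∑ k, G.incidence x k * ∫ t in (0:ℝ)..1, sol.v t k * sol.g t k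
        = ∑ k, ∫ t in (0:ℝ)..1, G.incidence x k * (sol.v t k * sol.g t k) := by
          simp_rw [intervalIntegral.integral_const_mul]
      _ = ∫ t in (0:ℝ)..1, ∑ k, G.incidence x k * (sol.v t k * sol.g t k) :=
          (intervalIntegral.integral_finset_sum fun k _ => hint k).symm
      _ = f1 x - f0 x := by simp_rw [← mul_assoc]; exact hFTC
  -- direction 2
  have dir2 : ∀ c ∈ B, ∃ c' ∈ A, c' ≤ c := by
    intro c hc
    obtain ⟨v, g, hvc, hgc, hgp, hconstr, rfl⟩ := hc
    have hvk : ∀ k : E, ContinuousOn (fun t => v t k) (Icc (0:ℝ) 1) :=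
      fun k => (continuous_apply k).comp_continuousOn hvc
    have hgk : ∀ k : E, ContinuousOn (fun t => g t k) (Icc (0:ℝ) 1) :=
      fun k => (continuous_apply k).comp_continuousOn hgc
    have hg0 : ∀ k : E, ∀ t ∈ Icc (0:ℝ) 1, 0 ≤ g t k := fun k t ht => (hgp t ht).1 k
    set gbar : E → ℝ := fun k => ∫ t in (0:ℝ)..1, g t k with hgbardef
    set m : E → ℝ := fun k => ∫ t in (0:ℝ)..1, v t k * g t k with hmdef
    set vbar : E → ℝ := fun k => if gbar k = 0 then 0 else m k / gbar k with hvbardef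
    have hgbar0 : ∀ k, 0 ≤ gbar k :=
      fun k => intervalIntegral.integral_nonneg zero_le_one (hg0 k)
    have hmz : ∀ k, gbar k = 0 → m k = 0 :=
      fun k h => integral_vg_zero (hgk k) (hvk k) (hg0 k) h
    have hvg : ∀ k, vbar k * gbar k = m k := by
      intro k
      by_cases h : gbar k = 0
      · simp [hvbardef, h, hmz k h]
      · simp only [hvbardef, if_neg h]; exact div_mul_cancel₀ _ h
    have hgbarsum : ∑ k, gbar k = 1 := by
      have h1 : (∫ t in (0:ℝ)..1, ∑ k, g t k) = ∑ k, gbar k := by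
        apply intervalIntegral.integral_finset_sum
        intro k _
        apply ContinuousOn.intervalIntegrable
        rw [uIcc_of_le zero_le_one]; exact hgk k
      rw [← h1]
      have h2 : (∫ t in (0:ℝ)..1, ∑ k, g t k) = ∫ t in (0:ℝ)..1, (1:ℝ) := by
        apply intervalIntegral.integral_congr
        intro t ht
        rw [uIcc_of_le zero_le_one] at ht
        exact (hgp t ht).2
      rw [h2]; simp
    refine ⟨Iq q (fun _ => vbar) (fun _ => gbar),
      ⟨⟨fun t x => f0 x + t * (f1 x - f0 x), fun _ => vbar, fun _ => gbar,
        ?_, ?_, continuousOn_const, continuousOn_const, ?_⟩, ?_, ?_, rfl⟩, ?_⟩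
    · -- f_prob
      intro t ht
      constructor
      · intro x
        have h0x := h0.1 x; have h1x := h1.1 x
        show 0 ≤ f0 x + t * (f1 x - f0 x)
        nlinarith [ht.1, ht.2]
      · show ∑ x, (f0 x + t * (f1 x - f0 x)) = 1
        have : ∑ x, (f0 x + t * (f1 x - f0 x))
            = (∑ x, f0 x) + t * ((∑ x, f1 x) - ∑ x, f0 x) := by
          rw [Finset.sum_add_distrib, ← Finset.mul_sum, Finset.sum_sub_distrib]
        rw [this, h0.2, h1.2]; ring
    · exact fun t ht => ⟨hgbar0, hgbarsum⟩
    · -- transport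
      intro x t ht
      have hsum : (∑ k, G.incidence x k * vbar k * gbar k) = f1 x - f0 x := by
        rw [← hconstr x]
        exact Finset.sum_congr rfl fun k _ => by rw [mul_assoc, hvg k]
      rw [hsum]
      simpa using (((hasDerivAt_id t).mul_const (f1 x - f0 x)).const_add (f0 x)).hasDerivWithinAt
    · funext y; simp
    · funext y; simp
    · -- Iq const ≤ Iq v g
      have hC0 : 0 ≤ ∑ k, gbar k * |vbar k| ^ q :=
        Finset.sum_nonneg fun k _ => mul_nonneg (hgbar0 k) (Real.rpow_nonneg (abs_nonneg _) _)
      have hIqconst : Iq q (fun _ : ℝ => vbar) (fun _ : ℝ => gbar)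
          = (∑ k, gbar k * |vbar k| ^ q) ^ (1/q) := by
        unfold Iq
        rw [intervalIntegral.integral_const]
        norm_num
      have hJsplit : (∫ t in (0:ℝ)..1, ∑ k, g t k * |v t k| ^ q)
          = ∑ k, ∫ t in (0:ℝ)..1, g t k * |v t k| ^ q := by
        apply intervalIntegral.integral_finset_sum
        intro k _
        apply ContinuousOn.intervalIntegrable
        rw [uIcc_of_le zero_le_one]
        exact (hgk k).mul ((rpow_abs_continuous q hq).comp_continuousOn (hvk k))
      have hedge : ∀ k : E, gbar k * |vbar k| ^ q ≤ ∫ t in (0:ℝ)..1, g t k * |v t k| ^ q := by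
        intro k
        set Jk := ∫ t in (0:ℝ)..1, g t k * |v t k| ^ q with hJkdef
        have hJk0 : 0 ≤ Jk :=
          intervalIntegral.integral_nonneg zero_le_one fun t ht =>
            mul_nonneg (hg0 k t ht) (Real.rpow_nonneg (abs_nonneg _) _)
        by_cases h : gbar k = 0
        · rw [h]; simpa using hJk0
        · have hpos : 0 < gbar k := lt_of_le_of_ne (hgbar0 k) (Ne.symm h)
          have hkey := key_ineq q hq (hgk k) (hvk k) (hg0 k)
          have hv' : vbar k = m k / gbar k := by simp [hvbardef, h]
          rw [hv', abs_div, abs_of_pos hpos, Real.div_rpow (abs_nonneg _) (le_of_lt hpos)]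
          rw [mul_comm, div_mul_eq_mul_div, div_le_iff₀ (Real.rpow_pos_of_pos hpos q)]
          have e1 : gbar k ^ (q-1) * gbar k ^ (1:ℝ) = gbar k ^ q := by
            rw [← Real.rpow_add hpos]; norm_num
          calc |m k| ^ q * gbar k ≤ (gbar k ^ (q-1) * Jk) * gbar k :=
                mul_le_mul_of_nonneg_right hkey (le_of_lt hpos)
            _ = Jk * (gbar k ^ (q-1) * gbar k ^ (1:ℝ)) := by rw [Real.rpow_one]; ring
            _ = Jk * gbar k ^ q := by rw [e1]
      rw [hIqconst]
      unfold Iq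
      apply Real.rpow_le_rpow hC0 _ (by positivity)
      rw [hJsplit]
      exact Finset.sum_le_sum fun k _ => hedge k
  -- assemble
  by_cases hB : B.Nonempty
  · apply le_antisymm
    · apply le_csInf hB
      intro c hc
      obtain ⟨c', hc'A, hle⟩ := dir2 c hc
      exact (csInf_le bddA hc'A).trans hle
    · obtain ⟨c, hc⟩ := hB
      obtain ⟨c', hc'A, -⟩ := dir2 c hc
      exact csInf_le_csInf bddB ⟨c', hc'A⟩ hsub
  · rw [Set.not_nonempty_iff_eq_empty] at hB
    have hA : A = ∅ := by
      rw [Set.eq_empty_iff_forall_notMem]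
      intro c hc
      have := hsub hc
      rw [hB] at this
      exact this
    rw [hA, hB]
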